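/- Let A be an abelian category with enough projectives and X a resolving subcategory of A. Given a short exact sequence 0 → X → Y → Z → 0 in A, the X-resolution dimensions satisfy: (1) X-res Y ≤ max{X-res X, X-res Z}; (2) X-res X ≤ max{X-res Y, X-res Z − 1}; (3) X-res Z ≤ max{X-res X + 1, X-res Y}. -/

import Mathlib

open CategoryTheory CategoryTheory.Limits

attribute [local instance] Abelian.hasFiniteBiproducts

universe v₁ v₂ v₃ u₁ u₂ u₃

/-- A recollement of abelian categories. -/
structure Recollement (A : Type u₁) (B : Type u₂) (C : Type u₃)
    [Category.{v₁} A] [Category.{v₂} B] [Category.{v₃} C]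
    [Abelian A] [Abelian B] [Abelian C] where
  /-- the functor `i^*` -/
  iStar : B ⥤ A
  /-- the functor `i_*` -/
  iLower : A ⥤ B
  /-- the functor `i^!` -/
  iShriek : B ⥤ A
  /-- the functor `j_!` -/
  jLower : C ⥤ B
  /-- the functor `j^*` -/
  jStar : B ⥤ C
  /-- the functor `j_*` -/
  jUpper : C ⥤ B
  adj₁ : iStar ⊣ iLower
  adj₂ : iLower ⊣ iShriek
  adj₃ : jLower ⊣ jStar
  adj₄ : jStar ⊣ jUpper
  iLower_preservesFiniteLimits : PreservesFiniteLimits iLower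
  iLower_preservesFiniteColimits : PreservesFiniteColimits iLower
  jStar_preservesFiniteLimits : PreservesFiniteLimits jStar
  jStar_preservesFiniteColimits : PreservesFiniteColimits jStar
  iStar_preservesFiniteColimits : PreservesFiniteColimits iStar
  iShriek_preservesFiniteLimits : PreservesFiniteLimits iShriek
  jLower_preservesFiniteColimits : PreservesFiniteColimits jLower
  jUpper_preservesFiniteLimits : PreservesFiniteLimits jUpper
  iLower_full : iLower.Full
  iLower_faithful : iLower.Faithful
  jLower_full : jLower.Full
  jLower_faithful : jLower.Faithful
  jUpper_full : jUpper.Full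
  jUpper_faithful : jUpper.Faithful
  im_eq_ker : ∀ b : B, IsZero (jStar.obj b) ↔ ∃ a : A, Nonempty (iLower.obj a ≅ b)

variable {A : Type u₁} [Category.{v₁} A] [Abelian A]

/-- A resolving subcategory: contains the projectives, closed under extensions
and under kernels of epimorphisms (given by short exact sequences). -/
structure IsResolving (X : Set A) : Prop where
  projective_mem : ∀ P : A, Projective P → P ∈ X
  ext_closed : ∀ S : ShortComplex A, S.ShortExact → S.X₁ ∈ X → S.X₃ ∈ X → S.X₂ ∈ X
  ker_epi_closed : ∀ S : ShortComplex A, S.ShortExact → S.X₂ ∈ X → S.X₃ ∈ X → S.X₁ ∈ X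

/-- `ResLE X M n` : there is an exact sequence `0 → X_n → ⋯ → X_0 → M → 0`
with all `X_i ∈ X`. -/
inductive ResLE (X : Set A) : A → ℕ → Prop
  | zero {M X₀ : A} (e : X₀ ≅ M) (hX₀ : X₀ ∈ X) : ResLE X M 0
  | succ {M K X₀ : A} {n : ℕ} (f : K ⟶ X₀) (g : X₀ ⟶ M) (w : f ≫ g = 0)
      (hse : (ShortComplex.mk f g w).ShortExact) (hX₀ : X₀ ∈ X)
      (hK : ResLE X K n) : ResLE X M (n + 1)

/-- The `X`-resolution dimension of an object `M` (`⊤` if there is no finite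
`X`-resolution). -/
noncomputable def resDim (X : Set A) (M : A) : ℕ∞ :=
  sInf {n : ℕ∞ | ∃ m : ℕ, ResLE X M m ∧ n = (m : ℕ∞)}

/-- The `X`-resolution dimension of the whole category. -/
noncomputable def resDimCat (X : Set A) : ℕ∞ :=
  ⨆ M : A, resDim X M

/-- The closure of a class of objects under finite direct sums and direct summands. -/
def addClosure (D : Set A) : Set A :=
  {a | ∃ (n : ℕ) (f : Fin n → A), (∀ i, f i ∈ D) ∧
    ∃ (s : a ⟶ ⨁ f) (r : ⨁ f ⟶ a), s ≫ r = 𝟙 a}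

section Aux

open ZeroObject

variable {X : Set A}

/-- Transport short exactness along isomorphisms of the three objects. -/
lemma shortExact_ofIso3 {S : ShortComplex A} (hS : S.ShortExact) {X₁' X₂' X₃' : A}
    (e₁ : S.X₁ ≅ X₁') (e₂ : S.X₂ ≅ X₂') (e₃ : S.X₃ ≅ X₃')
    (f' : X₁' ⟶ X₂') (g' : X₂' ⟶ X₃') (w' : f' ≫ g' = 0)
    (hf : S.f ≫ e₂.hom = e₁.hom ≫ f') (hg : S.g ≫ e₃.hom = e₂.hom ≫ g') :
    (ShortComplex.mk f' g' w').ShortExact :=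
  ShortComplex.shortExact_of_iso
    (ShortComplex.isoMk (S₁ := S) (S₂ := ShortComplex.mk f' g' w') e₁ e₂ e₃
      hf.symm hg.symm) hS

lemma IsResolving.zero_mem (hX : IsResolving X) : (0 : A) ∈ X :=
  hX.projective_mem 0 inferInstance

lemma ResLE.of_iso {M M' : A} {n : ℕ} (h : ResLE X M n) (e : M ≅ M') : ResLE X M' n := by
  cases h with
  | zero e' h' => exact .zero (e'.trans e) h'
  | succ f g w hse h1 hK =>
    refine .succ f (g ≫ e.hom) (by rw [← Category.assoc, w, zero_comp]) ?_ h1 hK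
    exact shortExact_ofIso3 hse (Iso.refl _) (Iso.refl _) e _ _ _ (by simp) (by simp)

lemma ResLE.up (hX : IsResolving X) {M : A} {n : ℕ} (h : ResLE X M n) :
    ResLE X M (n + 1) := by
  induction h with
  | @zero M X₀ e h' =>
    refine .succ (0 : (0 : A) ⟶ X₀) e.hom zero_comp ?_ h' (.zero (Iso.refl 0) hX.zero_mem)
    exact
      { exact := (ShortComplex.exact_iff_mono _ rfl).2 inferInstance
        mono_f := ⟨fun _ _ _ => (isZero_zero A).eq_of_tgt _ _⟩
        epi_g := inferInstance }
  | succ f g w hse h1 hK ih => exact .succ f g w hse h1 ih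

lemma ResLE.le (hX : IsResolving X) {M : A} {m n : ℕ} (h : ResLE X M m) (hmn : m ≤ n) :
    ResLE X M n := by
  induction hmn with
  | refl => exact h
  | step _ ih => exact ih.up hX

lemma ResLE.of_mem (hX : IsResolving X) {M : A} (h : M ∈ X) (n : ℕ) : ResLE X M n :=
  (ResLE.zero (Iso.refl M) h).le hX (Nat.zero_le n)

/-- Pulling back a short exact sequence `X₁ → X₂ → X₃` along `p : T ⟶ X₃` gives a
short exact sequence `X₁ → pullback S.g p → T`. -/
lemma pbSE₁ (S : ShortComplex A) (hS : S.ShortExact) {T : A} (p : T ⟶ S.X₃) :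
    (ShortComplex.mk
      (pullback.lift (f := S.g) (g := p) S.f 0 (by rw [S.zero, zero_comp]))
      (pullback.snd S.g p) (pullback.lift_snd _ _ _)).ShortExact := by
  have := hS.mono_f
  have := hS.epi_g
  have hmono : Mono (pullback.lift (f := S.g) (g := p) S.f 0 (by rw [S.zero, zero_comp])) := by
    have h : Mono (pullback.lift (f := S.g) (g := p) S.f 0 (by rw [S.zero, zero_comp]) ≫
        pullback.fst S.g p) := by
      rw [pullback.lift_fst]; infer_instance
    exact mono_of_mono _ (pullback.fst S.g p)
  refine { exact := ?_, mono_f := hmono, epi_g := inferInstance }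
  apply ShortComplex.exact_of_f_is_kernel
  refine KernelFork.IsLimit.ofι' _ _ (fun {W} t ht => ?_)
  have h1 : (t ≫ pullback.fst S.g p) ≫ S.g = 0 := by
    rw [Category.assoc, pullback.condition, ← Category.assoc, ht, zero_comp]
  refine ⟨hS.exact.lift (t ≫ pullback.fst S.g p) h1, ?_⟩
  apply pullback.hom_ext
  · dsimp only
    rw [Category.assoc, pullback.lift_fst]
    exact hS.exact.lift_f _ _
  · dsimp only
    rw [Category.assoc, pullback.lift_snd, comp_zero]
    exact ht.symm

/-- Pulling back as above, the kernel of `pullback.fst` is the kernel of `p`. -/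
lemma pbSE₂ (S : ShortComplex A) (hS : S.ShortExact) {L T : A} (u : L ⟶ T) (p : T ⟶ S.X₃)
    (hw : u ≫ p = 0) (hS2 : (ShortComplex.mk u p hw).ShortExact) :
    (ShortComplex.mk
      (pullback.lift (f := S.g) (g := p) 0 u (by rw [hw, zero_comp]))
      (pullback.fst S.g p) (pullback.lift_fst _ _ _)).ShortExact := by
  have := hS.epi_g
  have hm : Mono u := hS2.mono_f
  have he : Epi p := hS2.epi_g
  have hmono : Mono (pullback.lift (f := S.g) (g := p) 0 u (by rw [hw, zero_comp])) := by
    have h : Mono (pullback.lift (f := S.g) (g := p) 0 u (by rw [hw, zero_comp]) ≫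
        pullback.snd S.g p) := by
      rw [pullback.lift_snd]; exact hm
    exact mono_of_mono _ (pullback.snd S.g p)
  refine { exact := ?_, mono_f := hmono, epi_g := inferInstance }
  apply ShortComplex.exact_of_f_is_kernel
  refine KernelFork.IsLimit.ofι' _ _ (fun {W} t ht => ?_)
  have h1 : (t ≫ pullback.snd S.g p) ≫ p = 0 := by
    rw [Category.assoc, ← pullback.condition, ← Category.assoc, ht, zero_comp]
  refine ⟨hS2.exact.lift (t ≫ pullback.snd S.g p) h1, ?_⟩
  apply pullback.hom_ext
  · dsimp only
    rw [Category.assoc, pullback.lift_fst, comp_zero]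
    exact ht.symm
  · dsimp only
    rw [Category.assoc, pullback.lift_snd]
    exact hS2.exact.lift_f _ _

/-- Given short exact sequences `W → Y → V` (via `u, q`) and `K → V → T` (via `k, r`),
the kernel of the composite `q ≫ r` is the pullback of `q` and `k`, yielding a short
exact sequence `pullback q k → Y → T`. -/
lemma kerCompSE {W Y V K T : A} (u : W ⟶ Y) (q : Y ⟶ V) (wuq : u ≫ q = 0)
    (h1 : (ShortComplex.mk u q wuq).ShortExact)
    (k : K ⟶ V) (r : V ⟶ T) (wkr : k ≫ r = 0)
    (h2 : (ShortComplex.mk k r wkr).ShortExact) :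
    (ShortComplex.mk (pullback.fst q k) (q ≫ r)
      (by rw [← Category.assoc, pullback.condition, Category.assoc, wkr, comp_zero])).ShortExact := by
  have := h1.epi_g
  have := h2.mono_f
  have := h2.epi_g
  have hmono : Mono (pullback.fst q k) := inferInstance
  have hepi : Epi (q ≫ r) := epi_comp q r
  refine { exact := ?_, mono_f := hmono, epi_g := hepi }
  apply ShortComplex.exact_of_f_is_kernel
  refine KernelFork.IsLimit.ofι' _ _ (fun {W'} t ht => ?_)
  have h3 : (t ≫ q) ≫ r = 0 := by rw [Category.assoc, ht]
  refine ⟨pullback.lift t (h2.exact.lift (t ≫ q) h3) (h2.exact.lift_f _ _).symm, ?_⟩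
  exact pullback.lift_fst _ _ _

lemma biprodSE (P Q : A) :
    (ShortComplex.mk (biprod.inl : P ⟶ P ⊞ Q) biprod.snd (by simp)).ShortExact := by
  have s : (ShortComplex.mk (biprod.inl : P ⟶ P ⊞ Q) biprod.snd (by simp)).Splitting :=
    { r := biprod.fst
      s := biprod.inr
      f_r := by simp
      s_g := by simp
      id := by simp [biprod.total] }
  exact { exact := s.exact, mono_f := s.mono_f, epi_g := s.epi_g }

lemma IsResolving.biprod_mem (hX : IsResolving X) {P Q : A} (hP : P ∈ X) (hQ : Q ∈ X) :
    (P ⊞ Q) ∈ X :=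
  hX.ext_closed _ (biprodSE P Q) hP hQ

lemma ResLE.biprodRight (hX : IsResolving X) {M Q : A} {n : ℕ} (h : ResLE X M n)
    (hQ : Q ∈ X) : ResLE X (M ⊞ Q) n := by
  induction h with
  | @zero M X₀ e h' =>
    exact .zero (biprod.mapIso e (Iso.refl Q)) (hX.biprod_mem h' hQ)
  | @succ M K X₀ n f g w hse h1 hK ih =>
    clear ih
    have := hse.mono_f
    have := hse.epi_g
    refine .succ (f ≫ biprod.inl) (biprod.map g (𝟙 Q))
      (by rw [Category.assoc, biprod.inl_map, ← Category.assoc, w, zero_comp]) ?_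
      (hX.biprod_mem h1 hQ) hK
    have hepi : Epi (biprod.map g (𝟙 Q)) := by
      rw [Preadditive.epi_iff_cancel_zero]
      intro Z t ht
      have hl : biprod.inl ≫ t = (0 : M ⟶ Z) := by
        have := biprod.inl ≫= ht
        rw [comp_zero, ← Category.assoc, biprod.inl_map, Category.assoc] at this
        exact (cancel_epi g).1 (by rw [this, comp_zero])
      have hr : biprod.inr ≫ t = (0 : Q ⟶ Z) := by
        have := biprod.inr ≫= ht
        rwa [comp_zero, ← Category.assoc, biprod.inr_map, Category.id_comp] at this
      apply BinaryCofan.IsColimit.hom_ext (BinaryBiproduct.isColimit M Q) <;>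
        simpa using by first | exact hl | exact hr
    have hmono : Mono (f ≫ (biprod.inl : X₀ ⟶ X₀ ⊞ Q)) := mono_comp _ _
    refine { exact := ?_, mono_f := hmono, epi_g := hepi }
    apply ShortComplex.exact_of_f_is_kernel
    refine KernelFork.IsLimit.ofι' _ _ (fun {W} t ht => ?_)
    replace ht : t ≫ biprod.map g (𝟙 Q) = 0 := ht
    have h2 : (t ≫ biprod.fst) ≫ g = 0 := by
      rw [Category.assoc]
      simpa using ht =≫ biprod.fst
    have h3 : t ≫ biprod.snd = 0 := by
      simpa using ht =≫ biprod.snd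
    refine ⟨hse.exact.lift (t ≫ biprod.fst) h2, ?_⟩
    apply biprod.hom_ext
    · simpa using hse.exact.lift_f (t ≫ biprod.fst) h2
    · simpa [h3] using h3.symm

/-- Kernel of an epimorphism onto an object whose quotient is in `X`:
`ResLE` version of closure under kernels of epis. -/
lemma resLE_kernel (hX : IsResolving X) :
    ∀ (n : ℕ) (S : ShortComplex A), S.ShortExact → S.X₃ ∈ X → ResLE X S.X₂ n →
      ResLE X S.X₁ n := by
  intro n S hS h3 h2
  cases h2 with
  | @zero M X₀ e h' =>
    have hS' : (ShortComplex.mk (S.f ≫ e.inv) (e.hom ≫ S.g)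
        (by rw [Category.assoc, ← Category.assoc e.inv, e.inv_hom_id, Category.id_comp,
          S.zero])).ShortExact := by
      refine shortExact_ofIso3 hS (Iso.refl _) e.symm (Iso.refl _) _ _ _ (by simp) (by simp)
    have hmem := hX.ker_epi_closed _ hS' h' h3
    exact .zero (Iso.refl _) hmem
  | @succ M W Y₀ n u q wq hse h1 hW =>
    -- `M = S.X₂`; pull back `q : Y₀ ⟶ S.X₂` along `S.f : S.X₁ ⟶ S.X₂`
    have hU : (pullback q S.f) ∈ X := by
      refine hX.ker_epi_closed _ (kerCompSE u q wq hse S.f S.g S.zero hS) h1 h3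
    exact .succ _ _ _ (pbSE₁ _ hse S.f) hU hW

/-- `A(n)`-statement: extension closure at level `n`. -/
def StmtA (X : Set A) (n : ℕ) : Prop :=
  ∀ S : ShortComplex A, S.ShortExact → ResLE X S.X₁ n → ResLE X S.X₃ n → ResLE X S.X₂ n

lemma resLE_syzygy (hX : IsResolving X) {n : ℕ} (hA : StmtA X n) (S : ShortComplex A)
    (hS : S.ShortExact) (hT : S.X₂ ∈ X) (h3 : ResLE X S.X₃ (n + 1)) :
    ResLE X S.X₁ n := by
  cases h3 with
  | @succ M K' x₀ n k' p wp hse2 hx₀ hK' =>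
    have hV : ResLE X (pullback S.g p) n :=
      hA _ (pbSE₂ S hS k' p wp hse2) hK' (ResLE.of_mem hX hT n)
    have hres := resLE_kernel hX n _ (pbSE₁ S hS p) hx₀ hV
    exact hres

lemma resLE_quot (hX : IsResolving X) {n : ℕ} (hA : StmtA X n) (S : ShortComplex A)
    (hS : S.ShortExact) (h1 : ResLE X S.X₁ n) (h2 : ResLE X S.X₂ (n + 1)) :
    ResLE X S.X₃ (n + 1) := by
  cases h2 with
  | @succ M W y₀ n u q wq hse2 hy₀ hW =>
    have hU : ResLE X (pullback q S.f) n :=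
      hA _ (pbSE₁ _ hse2 S.f) hW h1
    exact .succ _ _ _ (kerCompSE u q wq hse2 S.f S.g S.zero hS) hy₀ hU

lemma stmtA (hX : IsResolving X) [EnoughProjectives A] : ∀ n : ℕ, StmtA X n := by
  intro n
  induction n with
  | zero =>
    intro S hS h1 h3
    cases h1 with
    | @zero M x e1 hx =>
      cases h3 with
      | @zero M' z e3 hz =>
        have hS' : (ShortComplex.mk (e1.hom ≫ S.f) (S.g ≫ e3.inv)
            (by rw [Category.assoc, ← Category.assoc S.f, S.zero, zero_comp,
              comp_zero])).ShortExact := by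
          refine shortExact_ofIso3 hS e1.symm (Iso.refl _) e3.symm _ _ _ (by simp) (by simp)
        have hmem := hX.ext_closed _ hS' hx hz
        exact .zero (Iso.refl _) hmem
  | succ n ih =>
    intro S hS h1 h3
    -- projective cover of `S.X₃`
    set Q := Projective.over S.X₃ with hQdef
    have hQX : Q ∈ X := hX.projective_mem _ inferInstance
    set π : Q ⟶ S.X₃ := Projective.π S.X₃ with hπdef
    have hseQ : (ShortComplex.mk (kernel.ι π) π (kernel.condition π)).ShortExact :=
      { exact := ShortComplex.exact_of_f_is_kernel _ (kernelIsKernel π)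
        mono_f := inferInstance
        epi_g := inferInstance }
    -- syzygy of `S.X₃`
    have hΩ : ResLE X (kernel π) n :=
      resLE_syzygy hX ih _ hseQ hQX h3
    -- the pullback `V`
    have hseα := pbSE₁ S hS π
    have hseβ := pbSE₂ S hS (kernel.ι π) π (kernel.condition π) hseQ
    -- `V ≅ S.X₁ ⊞ Q` since `Q` is projective
    have : Projective ((ShortComplex.mk
        (pullback.lift (f := S.g) (g := π) S.f 0 (by rw [S.zero, zero_comp]))
        (pullback.snd S.g π) (pullback.lift_snd _ _ _)).X₃) := by
      dsimp; infer_instance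
    have hsplit := hseα.splittingOfProjective
    have eV : pullback S.g π ≅ S.X₁ ⊞ Q := hsplit.isoBinaryBiproduct
    have hV : ResLE X (pullback S.g π) (n + 1) :=
      (ResLE.biprodRight hX h1 hQX).of_iso eV.symm
    exact resLE_quot hX ih _ hseβ hΩ hV

lemma stmtB (hX : IsResolving X) [EnoughProjectives A] {n : ℕ} (S : ShortComplex A)
    (hS : S.ShortExact) (h2 : ResLE X S.X₂ n) (h3 : ResLE X S.X₃ (n + 1)) :
    ResLE X S.X₁ n := by
  cases h3 with
  | @succ M L z₀ n l p wp hse2 hz₀ hL =>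
    have hV : ResLE X (pullback S.g p) n :=
      stmtA hX n _ (pbSE₂ S hS l p wp hse2) hL h2
    have hres := resLE_kernel hX n _ (pbSE₁ S hS p) hz₀ hV
    exact hres

lemma resDim_le_iff (hX : IsResolving X) {M : A} {n : ℕ} :
    resDim X M ≤ (n : ℕ∞) ↔ ResLE X M n := by
  constructor
  · intro h
    by_contra hc
    have hge : ∀ x ∈ {n : ℕ∞ | ∃ m : ℕ, ResLE X M m ∧ n = (m : ℕ∞)}, ((n : ℕ∞) + 1) ≤ x := by
      rintro x ⟨m, hm, rfl⟩
      by_cases hmn : m ≤ n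
      · exact absurd (hm.le hX hmn) hc
      · exact_mod_cast Nat.succ_le_of_lt (Nat.lt_of_not_le hmn)
    have hle := le_trans (le_sInf hge) h
    have : (n + 1 : ℕ) ≤ n := by exact_mod_cast hle
    omega
  · intro h
    exact sInf_le ⟨n, h, rfl⟩

lemma resLE_of_resDim_le (hX : IsResolving X) {M : A} {n : ℕ} (h : resDim X M ≤ (n : ℕ∞)) :
    ResLE X M n := (resDim_le_iff hX).1 h

lemma enat_le_of_forall {a b : ℕ∞} (h : ∀ n : ℕ, a ≤ (n : ℕ∞) → b ≤ (n : ℕ∞)) : b ≤ a := by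
  induction a using ENat.recTopCoe with
  | top => exact le_top
  | coe n => exact h n le_rfl

end Aux

/-- Bounds for resolution dimensions with respect to a resolving subcategory along
a short exact sequence `0 → X → Y → Z → 0` in an abelian category with enough
projectives. -/
theorem resDim_of_shortExact
    (A : Type u₁) [Category.{v₁} A] [Abelian A] [EnoughProjectives A]
    (X : Set A) (hX : IsResolving X) (S : ShortComplex A) (hS : S.ShortExact) :
    resDim X S.X₂ ≤ max (resDim X S.X₁) (resDim X S.X₃) ∧
    resDim X S.X₁ ≤ max (resDim X S.X₂) (resDim X S.X₃ - 1) ∧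
    resDim X S.X₃ ≤ max (resDim X S.X₁ + 1) (resDim X S.X₂) := by
  refine ⟨?_, ?_, ?_⟩
  · refine enat_le_of_forall (fun n hn => ?_)
    obtain ⟨h1, h3⟩ := max_le_iff.mp hn
    exact (resDim_le_iff hX).2
      (stmtA hX n S hS (resLE_of_resDim_le hX h1) (resLE_of_resDim_le hX h3))
  · refine enat_le_of_forall (fun n hn => ?_)
    obtain ⟨h2, h3⟩ := max_le_iff.mp hn
    have h3' : resDim X S.X₃ ≤ (n : ℕ∞) + 1 := tsub_le_iff_right.mp h3
    have h3'' : resDim X S.X₃ ≤ ((n + 1 : ℕ) : ℕ∞) := by exact_mod_cast h3'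
    exact (resDim_le_iff hX).2
      (stmtB hX S hS (resLE_of_resDim_le hX h2) (resLE_of_resDim_le hX h3''))
  · refine enat_le_of_forall (fun n hn => ?_)
    obtain ⟨h1, h2⟩ := max_le_iff.mp hn
    cases n with
    | zero =>
      exfalso
      have h0 : (1 : ℕ∞) ≤ 0 := le_trans le_add_self h1
      simp at h0
    | succ m =>
      have hne : resDim X S.X₁ ≠ ⊤ := by
        intro h
        rw [h] at h1
        exact ENat.coe_ne_top (m + 1) (top_le_iff.mp (le_trans le_self_add h1))
      lift resDim X S.X₁ to ℕ using hne with k hk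
      have hk1 : (k + 1 : ℕ) ≤ m + 1 := by exact_mod_cast h1
      have hXk : ResLE X S.X₁ m :=
        (resLE_of_resDim_le hX hk.ge).le hX (by omega)
      have hY : ResLE X S.X₂ (m + 1) := resLE_of_resDim_le hX h2
      exact (resDim_le_iff hX).2 (resLE_quot hX (stmtA hX m) S hS hXk hY)
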